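/- Assume r(t,i) ≥ 0 for all (t,i). Let P be the unique solution of the P-system associated with (ρ, r, Q) (which is strictly positive), and let H be the unique solution of the H-system associated with (r, Q, P). Then 0 < H(t,i) ≤ 1 for all t ∈ [0,T] and all i = 1,…,m. -/

import Mathlib

open MeasureTheory Filter
open scoped BigOperators Topology

/-! ### Auxiliary lemmas -/

lemma exp_int_aux (L T τ t : ℝ) :
    ∫ s in τ..t, L * Real.exp (L * (T - s)) = Real.exp (L*(T-τ)) - Real.exp (L*(T-t)) := by
  have h : ∀ s : ℝ, HasDerivAt (fun u => -Real.exp (L*(T-u))) (L * Real.exp (L*(T-s))) s := by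
    intro s
    have h1 : HasDerivAt (fun u : ℝ => L*(T-u)) (-L) s := by
      simpa using ((hasDerivAt_id s).const_sub T).const_mul L
    have h3 : HasDerivAt (fun u => -Real.exp (L*(T-u))) _ s := h1.exp.neg
    convert h3 using 1
    ring
  have hc : Continuous fun s : ℝ => L * Real.exp (L * (T - s)) := by fun_prop
  rw [intervalIntegral.integral_eq_sub_of_hasDerivAt (fun s _ => h s) (hc.intervalIntegrable _ _)]
  ring

lemma exp_int_aux' (L T τ t : ℝ) :
    ∫ s in τ..t, L * Real.exp (L * (s - T)) = Real.exp (L*(t-T)) - Real.exp (L*(τ-T)) := by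
  have h : ∀ s : ℝ, HasDerivAt (fun u => Real.exp (L*(u-T))) (L * Real.exp (L*(s-T))) s := by
    intro s
    have h1 : HasDerivAt (fun u : ℝ => L*(u-T)) L s := by
      simpa using ((hasDerivAt_id s).sub_const T).const_mul L
    have h2 := h1.exp
    convert h2 using 1
    ring
  have hc : Continuous fun s : ℝ => L * Real.exp (L * (s - T)) := by fun_prop
  rw [intervalIntegral.integral_eq_sub_of_hasDerivAt (fun s _ => h s) (hc.intervalIntegrable _ _)]

lemma integrableOn_Icc_of_bound {T C : ℝ} {f : ℝ → ℝ}
    (hf : AEMeasurable f (volume.restrict (Set.Icc 0 T)))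
    (hbd : ∀ s ∈ Set.Icc (0:ℝ) T, |f s| ≤ C) :
    MeasureTheory.IntegrableOn f (Set.Icc 0 T) := by
  refine MeasureTheory.Integrable.mono' (g := fun _ => C)
    (MeasureTheory.integrableOn_const measure_Icc_lt_top.ne) hf.aestronglyMeasurable ?_
  filter_upwards [MeasureTheory.ae_restrict_mem measurableSet_Icc] with s hs
  simpa [Real.norm_eq_abs] using hbd s hs

lemma abs_sum_le_of_le {m : ℕ} {B : ℝ} (c : Fin m → ℝ) (h : ∀ j, |c j| ≤ B) :
    |∑ j, c j| ≤ (m:ℝ) * B := by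
  calc |∑ j, c j| ≤ ∑ j, |c j| := Finset.abs_sum_le_sum_abs _ _
    _ ≤ ∑ _j : Fin m, B := Finset.sum_le_sum (fun j _ => h j)
    _ = (m:ℝ) * B := by simp [Finset.sum_const, nsmul_eq_mul]

lemma abs_mul_le_aux {x y A B : ℝ} (h1 : |x| ≤ A) (h2 : |y| ≤ B) (hA : 0 ≤ A) :
    |x * y| ≤ A * B := by
  rw [abs_mul]
  exact mul_le_mul h1 h2 (abs_nonneg _) hA

set_option maxHeartbeats 2000000 in
/-- Core lemma: a continuous solution of a linear integral system
`X(t,i) = κ(i) - ∫_t^T [a X_i - Σ_j b_{ij} X_j - h_i]` with nonnegative terminal data `κ`,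
nonnegative forcing `h`, bounded coefficients and nonnegative off-diagonal coupling `b`
stays nonnegative on `[0,T]`. -/
lemma core_nonneg {m : ℕ} {T : ℝ} (hT : 0 < T)
    (X F a h : ℝ → Fin m → ℝ) (b : ℝ → Fin m → Fin m → ℝ) (κ : Fin m → ℝ) (C : ℝ)
    (hXc : ∀ i, ContinuousOn (fun t => X t i) (Set.Icc 0 T))
    (hFint : ∀ i, IntegrableOn (fun s => F s i) (Set.Icc 0 T))
    (hκ : ∀ i, 0 ≤ κ i) (hC : 0 ≤ C)
    (ha : ∀ s ∈ Set.Icc (0:ℝ) T, ∀ i, |a s i| ≤ C)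
    (hb : ∀ s ∈ Set.Icc (0:ℝ) T, ∀ i j, |b s i j| ≤ C)
    (hboff : ∀ s ∈ Set.Icc (0:ℝ) T, ∀ i j, i ≠ j → 0 ≤ b s i j)
    (hh : ∀ s ∈ Set.Icc (0:ℝ) T, ∀ i, 0 ≤ h s i)
    (hF : ∀ s ∈ Set.Icc (0:ℝ) T, ∀ i, F s i = a s i * X s i - (∑ j, b s i j * X s j) - h s i)
    (heq : ∀ t ∈ Set.Icc (0:ℝ) T, ∀ i, X t i = κ i - ∫ s in t..T, F s i) :
    ∀ t ∈ Set.Icc (0:ℝ) T, ∀ i, 0 ≤ X t i := by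
  set K : ℝ := ((m:ℝ)+1)*C with hKdef
  have hK0 : 0 ≤ K := by positivity
  set L : ℝ := K + 1 with hLdef
  have hL0 : 0 < L := by positivity
  have hXT : ∀ i, X T i = κ i := by
    intro i
    have := heq T ⟨le_of_lt hT, le_refl T⟩ i
    simpa [intervalIntegral.integral_same] using this
  have hII : ∀ u v : ℝ, 0 ≤ u → u ≤ v → v ≤ T → ∀ i,
      IntervalIntegrable (fun s => F s i) volume u v := by
    intro u v hu huv hvT i
    refine ((hFint i).mono_set ?_).intervalIntegrable
    rw [Set.uIcc_of_le huv]
    exact Set.Icc_subset_Icc hu hvT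
  have key : ∀ ε : ℝ, 0 < ε → ∀ t ∈ Set.Icc (0:ℝ) T, ∀ i,
      0 ≤ X t i + ε * Real.exp (L*(T-t)) := by
    intro ε hε
    set Xe : ℝ → Fin m → ℝ := fun t i => X t i + ε * Real.exp (L*(T-t)) with hXedef
    have hXec : ∀ i, ContinuousOn (fun t => Xe t i) (Set.Icc 0 T) := by
      intro i
      exact (hXc i).add (Continuous.continuousOn (by fun_prop))
    set A : Set ℝ := {t | t ∈ Set.Icc (0:ℝ) T ∧ ∀ s ∈ Set.Icc t T, ∀ i, 0 ≤ Xe s i} with hAdef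
    have hXeT : ∀ i, 0 < Xe T i := by
      intro i
      have : Xe T i = κ i + ε := by simp [hXedef, hXT i]
      rw [this]
      have := hκ i; linarith
    have hTA : T ∈ A := by
      refine ⟨⟨le_of_lt hT, le_refl T⟩, ?_⟩
      intro s hs i
      have hsT : s = T := le_antisymm hs.2 hs.1
      rw [hsT]; exact le_of_lt (hXeT i)
    have hAne : A.Nonempty := ⟨T, hTA⟩
    have hAbdd : BddBelow A := ⟨0, fun x hx => hx.1.1⟩
    set τ := sInf A with hτdef
    have hτmem : τ ∈ Set.Icc (0:ℝ) T :=
      ⟨le_csInf hAne (fun x hx => hx.1.1), csInf_le hAbdd hTA⟩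
    have hPτ' : ∀ s, τ < s → s ≤ T → ∀ i, 0 ≤ Xe s i := by
      intro s hτs hsT i
      obtain ⟨u, huA, hus⟩ := exists_lt_of_csInf_lt hAne hτs
      exact huA.2 s ⟨le_of_lt hus, hsT⟩ i
    have hPτ : ∀ s ∈ Set.Icc τ T, ∀ i, 0 ≤ Xe s i := by
      intro s hs i
      rcases eq_or_lt_of_le hs.1 with hsτ | hsτ
      · rw [← hsτ]
        rcases eq_or_lt_of_le hτmem.2 with hτT | hτT
        · rw [hτT]; exact le_of_lt (hXeT i)
        · have hsub : Set.Ioc τ T ⊆ Set.Icc (0:ℝ) T := fun x hx =>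
            ⟨le_trans hτmem.1 (le_of_lt hx.1), hx.2⟩
          have hcw : ContinuousWithinAt (fun u => Xe u i) (Set.Ioc τ T) τ :=
            ((hXec i) τ hτmem).mono hsub
          have hne : (𝓝[Set.Ioc τ T] τ).NeBot := by
            apply mem_closure_iff_nhdsWithin_neBot.mp
            rw [closure_Ioc (ne_of_lt hτT)]
            exact ⟨le_refl _, le_of_lt hτT⟩
          refine ge_of_tendsto hcw.tendsto ?_
          filter_upwards [self_mem_nhdsWithin] with u hu
          exact hPτ' u hu.1 hu.2 i
      · exact hPτ' s hsτ hs.2 i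
    rcases eq_or_lt_of_le hτmem.1 with hτ0 | hτ0
    · intro t ht i
      exact hPτ t ⟨hτ0 ▸ ht.1, ht.2⟩ i
    exfalso
    by_cases hall : ∀ i, 0 < Xe τ i
    · have hev : ∀ᶠ s in 𝓝[Set.Icc (0:ℝ) T] τ, ∀ i, 0 < Xe s i := by
        rw [eventually_all]
        intro i
        exact ((hXec i) τ hτmem).eventually (eventually_gt_nhds (hall i))
      obtain ⟨δ, hδ0, hδp⟩ := Metric.mem_nhdsWithin_iff.mp hev
      set t0 : ℝ := max 0 (τ - δ/2) with ht0def
      have ht0τ : t0 < τ := max_lt hτ0 (by linarith)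
      have ht0A : t0 ∈ A := by
        refine ⟨⟨le_max_left _ _, le_trans (le_of_lt ht0τ) hτmem.2⟩, ?_⟩
        intro s hs i
        rcases le_or_gt τ s with hτs | hτs
        · exact hPτ s ⟨hτs, hs.2⟩ i
        · refine le_of_lt ((hδp ⟨?_, le_trans (le_max_left _ _) hs.1, hs.2⟩ :
            ∀ i, 0 < Xe s i) i)
          rw [Metric.mem_ball, Real.dist_eq, abs_of_nonpos (by linarith)]
          have h6 : τ - δ/2 ≤ t0 := le_max_right _ _
          have h7 := hs.1
          linarith
      have := csInf_le hAbdd ht0A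
      linarith
    · push_neg at hall
      obtain ⟨i₀, hi₀⟩ := hall
      have hXeτ0 : Xe τ i₀ = 0 :=
        le_antisymm hi₀ (hPτ τ ⟨le_refl _, hτmem.2⟩ i₀)
      have hτT : τ < T := by
        rcases eq_or_lt_of_le hτmem.2 with hτT | hτT
        · exfalso; rw [hτT] at hXeτ0; exact absurd hXeτ0 (ne_of_gt (hXeT i₀))
        · exact hτT
      set η : ℝ := ε / L with hηdef
      have hη0 : 0 < η := by positivity
      have habs : ∀ᶠ y in 𝓝 (Xe τ i₀), |y| < η := by
        rw [hXeτ0]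
        have : ∀ᶠ y in 𝓝 (0:ℝ), |y - 0| < η := eventually_abs_sub_lt 0 hη0
        simpa using this
      have hev : ∀ᶠ s in 𝓝[Set.Icc (0:ℝ) T] τ, |Xe s i₀| < η :=
        ((hXec i₀) τ hτmem).eventually habs
      obtain ⟨δ', hδ'0, hδ'p⟩ := Metric.mem_nhdsWithin_iff.mp hev
      set t : ℝ := min (τ + δ'/2) T with htdef
      have hτt : τ < t := lt_min (by linarith) hτT
      have htT : t ≤ T := min_le_right _ _
      have ht0 : 0 ≤ t := le_trans hτmem.1 (le_of_lt hτt)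
      have hsplit : X t i₀ - X τ i₀ = ∫ s in τ..t, F s i₀ := by
        have h1 := heq τ hτmem i₀
        have h2 := heq t ⟨ht0, htT⟩ i₀
        have hadd := intervalIntegral.integral_add_adjacent_intervals
          (hII τ t hτmem.1 (le_of_lt hτt) htT i₀) (hII t T ht0 htT (le_refl T) i₀)
        rw [h1, h2]
        linarith
      have hint2 : IntervalIntegrable (fun s => ε * (L * Real.exp (L*(T-s)))) volume τ t :=
        (Continuous.intervalIntegrable (by fun_prop) _ _)
      have hXet : Xe t i₀ = ∫ s in τ..t, (F s i₀ - ε * (L * Real.exp (L*(T-s)))) := by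
        rw [intervalIntegral.integral_sub (hII τ t hτmem.1 (le_of_lt hτt) htT i₀) hint2,
          intervalIntegral.integral_const_mul, exp_int_aux L T τ t]
        have h4 : X τ i₀ = -(ε * Real.exp (L*(T-τ))) := by
          have : Xe τ i₀ = X τ i₀ + ε * Real.exp (L*(T-τ)) := rfl
          rw [this] at hXeτ0; linarith
        have h5 : Xe t i₀ = X t i₀ + ε * Real.exp (L*(T-t)) := rfl
        rw [h5]
        linarith [hsplit]
      have hmono : ∫ s in τ..t, (F s i₀ - ε * (L * Real.exp (L*(T-s)))) ≤
          ∫ s in τ..t, (-η) := by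
        apply intervalIntegral.integral_mono_on (le_of_lt hτt)
          ((hII τ t hτmem.1 (le_of_lt hτt) htT i₀).sub hint2)
          (intervalIntegrable_const)
        intro s hs
        have hs0T : s ∈ Set.Icc (0:ℝ) T := ⟨le_trans hτmem.1 hs.1, le_trans hs.2 htT⟩
        have hes0 : 0 < Real.exp (L*(T-s)) := Real.exp_pos _
        have hes1 : 1 ≤ Real.exp (L*(T-s)) :=
          Real.one_le_exp (by nlinarith [hs0T.2, hL0])
        have hXe0 : ∀ j, 0 ≤ Xe s j := fun j => hPτ s ⟨hs.1, le_trans hs.2 htT⟩ j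
        have hXesmall : |Xe s i₀| < η := by
          refine hδ'p ⟨?_, hs0T⟩
          rw [Metric.mem_ball, Real.dist_eq, abs_of_nonneg (by linarith [hs.1])]
          have h6 : t ≤ τ + δ'/2 := min_le_left _ _
          have h7 := hs.2
          linarith
        set es := Real.exp (L*(T-s)) with hesdef
        have hXdecomp : ∀ j, X s j = Xe s j - ε * es := fun j => by
          simp [hXedef, hesdef]
        have hXbd : |X s i₀| ≤ η + ε * es := by
          rw [abs_le]
          rw [hXdecomp i₀]
          have h7 := abs_lt.mp hXesmall
          have h8 := hXe0 i₀
          constructor <;> nlinarith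
        have hterm : ∀ j, -(b s i₀ j * X s j) ≤ C * (η + ε * es) := by
          intro j
          by_cases hji : j = i₀
          · subst hji
            have h9 : -(b s j j * X s j) ≤ |b s j j * X s j| := neg_le_abs _
            rw [abs_mul] at h9
            have h10 := hb s hs0T j j
            have h11 := abs_nonneg (X s j)
            nlinarith
          · have hb0 := hboff s hs0T i₀ j (fun hc => hji hc.symm)
            have hXj : -(ε * es) ≤ X s j := by
              rw [hXdecomp j]; have := hXe0 j; linarith
            have h10 := hb s hs0T i₀ j
            have h11 : b s i₀ j ≤ C := (abs_le.mp h10).2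
            calc -(b s i₀ j * X s j) = b s i₀ j * (-(X s j)) := by ring
              _ ≤ b s i₀ j * (ε * es) := mul_le_mul_of_nonneg_left (by linarith) hb0
              _ ≤ C * (ε * es) := mul_le_mul_of_nonneg_right h11 (by positivity)
              _ ≤ C * (η + ε * es) := by nlinarith [mul_nonneg hC hη0.le]
        have hsum : -(∑ j, b s i₀ j * X s j) ≤ (m:ℝ) * (C * (η + ε * es)) := by
          rw [← Finset.sum_neg_distrib]
          calc ∑ j, -(b s i₀ j * X s j) ≤ ∑ _j : Fin m, C * (η + ε * es) :=
                Finset.sum_le_sum (fun j _ => hterm j)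
            _ = (m:ℝ) * (C * (η + ε * es)) := by
                simp [Finset.sum_const, Finset.card_univ, nsmul_eq_mul]
        have haX : a s i₀ * X s i₀ ≤ C * (η + ε * es) := by
          have h9 : a s i₀ * X s i₀ ≤ |a s i₀ * X s i₀| := le_abs_self _
          rw [abs_mul] at h9
          have h10 := ha s hs0T i₀
          have h11 := abs_nonneg (X s i₀)
          nlinarith
        have hh0 := hh s hs0T i₀
        have hFbd : F s i₀ ≤ K * (η + ε * es) := by
          rw [hF s hs0T i₀, hKdef]
          nlinarith
        have hfin : K * (η + ε * es) - ε * (L * es) ≤ -η := by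
          have h12 : K * η - ε = -η := by
            rw [hηdef, hLdef]
            field_simp
            ring
          have h13 : K * (η + ε * es) - ε * (L * es) = K * η - ε * es := by
            rw [hLdef]; ring
          rw [h13]
          nlinarith
        linarith
      have hconstint : ∫ s in τ..t, (-η : ℝ) = -η * (t - τ) := by
        rw [intervalIntegral.integral_const, smul_eq_mul]; ring
      have hle := hPτ t ⟨le_of_lt hτt, htT⟩ i₀
      rw [hXet] at hle
      rw [hconstint] at hmono
      nlinarith
  intro t ht i
  by_contra hneg
  push_neg at hneg
  set e := Real.exp (L*(T-t)) with hedef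
  have he : 0 < e := Real.exp_pos _
  have hk := key (-(X t i) / (2*e)) (div_pos (by linarith) (by positivity)) t ht i
  have : X t i + (-(X t i)/(2*e)) * e = X t i / 2 := by
    field_simp
    ring
  rw [this] at hk
  linarith

/-- Strict positivity: with terminal data `1` and no forcing, solutions are strictly positive. -/
lemma core_pos {m : ℕ} {T : ℝ} (hT : 0 < T)
    (X F a : ℝ → Fin m → ℝ) (b : ℝ → Fin m → Fin m → ℝ) (C : ℝ)
    (hXc : ∀ i, ContinuousOn (fun t => X t i) (Set.Icc 0 T))
    (hFint : ∀ i, IntegrableOn (fun s => F s i) (Set.Icc 0 T))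
    (hC : 0 ≤ C)
    (ha : ∀ s ∈ Set.Icc (0:ℝ) T, ∀ i, |a s i| ≤ C)
    (hb : ∀ s ∈ Set.Icc (0:ℝ) T, ∀ i j, |b s i j| ≤ C)
    (hboff : ∀ s ∈ Set.Icc (0:ℝ) T, ∀ i j, i ≠ j → 0 ≤ b s i j)
    (hF : ∀ s ∈ Set.Icc (0:ℝ) T, ∀ i, F s i = a s i * X s i - (∑ j, b s i j * X s j))
    (heq : ∀ t ∈ Set.Icc (0:ℝ) T, ∀ i, X t i = 1 - ∫ s in t..T, F s i) :
    ∀ t ∈ Set.Icc (0:ℝ) T, ∀ i, 0 < X t i := by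
  set L : ℝ := ((m:ℝ)+1)*C + 1 with hLdef
  have hL0 : 0 < L := by positivity
  set W : ℝ → ℝ := fun u => Real.exp (L*(u - T)) with hWdef
  have hW0 : ∀ u, 0 < W u := fun u => Real.exp_pos _
  have hWc : Continuous W := by fun_prop
  have hkey := core_nonneg hT (fun t i => X t i - W t) (fun s i => F s i - L * W s) a
      (fun s i => (L - a s i + ∑ j, b s i j) * W s) b (fun _ => 0) C
      (fun i => (hXc i).sub hWc.continuousOn)
      (fun i => (hFint i).sub ((continuous_const.mul hWc).integrableOn_Icc))
      (fun _ => le_refl 0) hC ha hb hboff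
      ?_ ?_ ?_
  · intro t ht i
    have h1 := hkey t ht i
    have := hW0 t
    linarith
  · -- h ≥ 0
    intro s hs i
    have h1 := ha s hs i
    have h2 : -((m:ℝ)*C) ≤ ∑ j, b s i j := by
      have hle : ∀ j ∈ Finset.univ, -C ≤ b s i j := fun j _ => (abs_le.mp (hb s hs i j)).1
      calc -((m:ℝ)*C) = ∑ _j : Fin m, (-C) := by
            simp [Finset.sum_const, nsmul_eq_mul]
        _ ≤ ∑ j, b s i j := Finset.sum_le_sum hle
    have h3 : 0 ≤ L - a s i + ∑ j, b s i j := by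
      have := (abs_le.mp h1).2
      rw [hLdef]
      nlinarith
    exact mul_nonneg h3 (le_of_lt (hW0 s))
  · -- structure of F'
    intro s hs i
    show F s i - L * W s = a s i * (X s i - W s) -
      (∑ j, b s i j * (X s j - W s)) - (L - a s i + ∑ j, b s i j) * W s
    have hsum : ∑ j, b s i j * (X s j - W s)
        = (∑ j, b s i j * X s j) - (∑ j, b s i j) * W s := by
      simp only [mul_sub]
      rw [Finset.sum_sub_distrib, Finset.sum_mul]
    rw [hF s hs i, hsum]
    ring
  · -- integral equation for X - W
    intro t ht i
    have h1 := heq t ht i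
    have hIF : IntervalIntegrable (fun s => F s i) volume t T := by
      refine ((hFint i).mono_set ?_).intervalIntegrable
      rw [Set.uIcc_of_le ht.2]
      exact Set.Icc_subset_Icc ht.1 (le_refl T)
    have hIW : IntervalIntegrable (fun s => L * W s) volume t T :=
      ((continuous_const.mul hWc).intervalIntegrable _ _)
    rw [intervalIntegral.integral_sub hIF hIW]
    have h2 : ∫ s in t..T, L * W s = 1 - W t := by
      have := exp_int_aux' L T t T
      simp only [hWdef]
      rw [this]
      simp
    rw [h2]
    show X t i - W t = 0 - ((∫ s in t..T, F s i) - (1 - W t))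
    linarith

/-- `Q` is the generator matrix of a continuous-time Markov chain:
off-diagonal entries are nonnegative and each row sums to zero. -/
def IsGenerator {S : Type*} [Fintype S] (Q : Matrix S S ℝ) : Prop :=
  (∀ i j, i ≠ j → 0 ≤ Q i j) ∧ ∀ i, ∑ j, Q i j = 0

/-- `f : [0,T] × S → ℝ` is bounded and measurable (in time, for each state). -/
def BddMeasOn {S : Type*} [Fintype S] (T : ℝ) (f : ℝ → S → ℝ) : Prop :=
  (∀ i, Measurable fun t => f t i) ∧
    ∃ C : ℝ, ∀ t ∈ Set.Icc (0:ℝ) T, ∀ i, |f t i| ≤ C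

/-- `P` is a solution of the P-system associated with `(ρ, r, Q)` on `[0,T]`:
`P` is continuous on `[0,T]` and
`P(t,i) = 1 - ∫_t^T [P(s,i)(ρ(s,i) - 2 r(s,i)) - Σ_j q_{ij} P(s,j)] ds`. -/
def IsPSol {S : Type*} [Fintype S] (T : ℝ) (Q : Matrix S S ℝ)
    (ρ r : ℝ → S → ℝ) (P : ℝ → S → ℝ) : Prop :=
  (∀ i, ContinuousOn (fun t => P t i) (Set.Icc 0 T)) ∧
    ∀ t ∈ Set.Icc (0:ℝ) T, ∀ i,
      P t i = 1 - ∫ s in t..T, (P s i * (ρ s i - 2 * r s i) - ∑ j, Q i j * P s j)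

/-- `H` is a solution of the H-system associated with `(r, Q, P)` on `[0,T]`:
`H` is continuous on `[0,T]` and
`H(t,i) = 1 - ∫_t^T [H(s,i) r(s,i) - (1/P(s,i)) Σ_j q_{ij} P(s,j) H(s,j)
  + (H(s,i)/P(s,i)) Σ_j q_{ij} P(s,j)] ds`. -/
def IsHSol {S : Type*} [Fintype S] (T : ℝ) (Q : Matrix S S ℝ)
    (r : ℝ → S → ℝ) (P : ℝ → S → ℝ) (H : ℝ → S → ℝ) : Prop :=
  (∀ i, ContinuousOn (fun t => H t i) (Set.Icc 0 T)) ∧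
    ∀ t ∈ Set.Icc (0:ℝ) T, ∀ i,
      H t i = 1 - ∫ s in t..T,
        (H s i * r s i - (1 / P s i) * ∑ j, Q i j * P s j * H s j
          + (H s i / P s i) * ∑ j, Q i j * P s j)

set_option maxHeartbeats 1600000 in
/-- if `r ≥ 0`, `P` solves the P-system associated with `(ρ, r, Q)`
and `H` solves the H-system associated with `(r, Q, P)`, then `0 < H(t,i) ≤ 1`. -/
theorem h_system_bounds (m : ℕ) (hm : 1 ≤ m) (T : ℝ) (hT : 0 < T)
    (Q : Matrix (Fin m) (Fin m) ℝ) (hQ : IsGenerator Q)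
    (ρ r : ℝ → Fin m → ℝ) (hρ : BddMeasOn T ρ) (hr : BddMeasOn T r)
    (hrpos : ∀ t ∈ Set.Icc (0:ℝ) T, ∀ i, 0 ≤ r t i)
    (P : ℝ → Fin m → ℝ) (hP : IsPSol T Q ρ r P)
    (H : ℝ → Fin m → ℝ) (hH : IsHSol T Q r P H) :
    ∀ t ∈ Set.Icc (0:ℝ) T, ∀ i, 0 < H t i ∧ H t i ≤ 1 := by
  obtain ⟨hρm, Cρ, hCρ⟩ := hρ
  obtain ⟨hrm, Cr, hCr⟩ := hr
  have hi0 : Nonempty (Fin m) := ⟨⟨0, hm⟩⟩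
  have h0T : (0:ℝ) ∈ Set.Icc (0:ℝ) T := ⟨le_refl 0, le_of_lt hT⟩
  have hCρ0 : 0 ≤ Cρ := le_trans (abs_nonneg _) (hCρ 0 h0T hi0.some)
  have hCr0 : 0 ≤ Cr := le_trans (abs_nonneg _) (hCr 0 h0T hi0.some)
  set CQ : ℝ := ∑ i, ∑ j, |Q i j| with hCQdef
  have hCQ0 : 0 ≤ CQ :=
    Finset.sum_nonneg (fun i _ => Finset.sum_nonneg (fun j _ => abs_nonneg _))
  have hCQ : ∀ i j, |Q i j| ≤ CQ := by
    intro i j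
    calc |Q i j| ≤ ∑ j', |Q i j'| :=
          Finset.single_le_sum (f := fun j' => |Q i j'|)
            (fun j' _ => abs_nonneg _) (Finset.mem_univ j)
      _ ≤ CQ := Finset.single_le_sum (f := fun i' => ∑ j', |Q i' j'|)
          (fun i' _ => Finset.sum_nonneg (fun j' _ => abs_nonneg _)) (Finset.mem_univ i)
  have hMp : ∃ Mp : ℝ, 0 ≤ Mp ∧ ∀ t ∈ Set.Icc (0:ℝ) T, ∀ i, |P t i| ≤ Mp := by
    have hbd : ∀ i : Fin m, ∃ M, ∀ t ∈ Set.Icc (0:ℝ) T, |P t i| ≤ M := by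
      intro i
      obtain ⟨M, hM⟩ := isCompact_Icc.exists_bound_of_continuousOn (hP.1 i)
      exact ⟨M, fun t ht => by simpa [Real.norm_eq_abs] using hM t ht⟩
    choose Mf hMf using hbd
    refine ⟨∑ i, |Mf i|, Finset.sum_nonneg (fun i _ => abs_nonneg _), ?_⟩
    intro t ht i
    calc |P t i| ≤ Mf i := hMf i t ht
      _ ≤ |Mf i| := le_abs_self _
      _ ≤ ∑ i', |Mf i'| :=
          Finset.single_le_sum (f := fun i' => |Mf i'|)
            (fun i' _ => abs_nonneg _) (Finset.mem_univ i)
  obtain ⟨Mp, hMp0, hMpbd⟩ := hMp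
  have hPae : ∀ i, AEMeasurable (fun s => P s i) (volume.restrict (Set.Icc 0 T)) :=
    fun i => (hP.1 i).aemeasurable measurableSet_Icc
  -- Step 1: strict positivity of P on [0,T]
  have hPpos : ∀ t ∈ Set.Icc (0:ℝ) T, ∀ i, 0 < P t i := by
    refine core_pos hT P
      (fun s i => P s i * (ρ s i - 2 * r s i) - ∑ j, Q i j * P s j)
      (fun s i => ρ s i - 2 * r s i) (fun _ i j => Q i j)
      (Cρ + 2*Cr + CQ) hP.1 ?_ (by positivity) ?_ ?_ ?_ ?_ hP.2
    · intro i
      apply integrableOn_Icc_of_bound (C := Mp*(Cρ + 2*Cr) + (m:ℝ)*(CQ*Mp))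
      · exact ((hPae i).mul (((hρm i).aemeasurable).sub
          ((measurable_const.mul (hrm i)).aemeasurable))).sub
          (Finset.aemeasurable_fun_sum _ (fun j _ => (aemeasurable_const.mul (hPae j))))
      · intro s hs
        have h1 : |P s i * (ρ s i - 2 * r s i)| ≤ Mp * (Cρ + 2*Cr) := by
          refine abs_mul_le_aux (hMpbd s hs i) ?_ hMp0
          calc |ρ s i - 2 * r s i| ≤ |ρ s i| + |2 * r s i| := abs_sub _ _
            _ ≤ Cρ + 2*Cr := by
                rw [abs_mul, abs_two]
                have := hCρ s hs i; have := hCr s hs i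
                nlinarith [abs_nonneg (r s i)]
        have h2 : |∑ j, Q i j * P s j| ≤ (m:ℝ)*(CQ*Mp) :=
          abs_sum_le_of_le _ (fun j => abs_mul_le_aux (hCQ i j) (hMpbd s hs j) hCQ0)
        calc |P s i * (ρ s i - 2 * r s i) - ∑ j, Q i j * P s j|
            ≤ |P s i * (ρ s i - 2 * r s i)| + |∑ j, Q i j * P s j| := abs_sub _ _
          _ ≤ Mp*(Cρ + 2*Cr) + (m:ℝ)*(CQ*Mp) := add_le_add h1 h2
    · intro s hs i
      calc |ρ s i - 2 * r s i| ≤ |ρ s i| + |2 * r s i| := abs_sub _ _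
        _ ≤ Cρ + 2*Cr + CQ := by
            rw [abs_mul, abs_two]
            have := hCρ s hs i; have := hCr s hs i
            nlinarith [abs_nonneg (r s i)]
    · intro s hs i j
      have := hCQ i j
      have h1 : (0:ℝ) ≤ Cρ + 2*Cr := by linarith
      calc |Q i j| ≤ CQ := hCQ i j
        _ ≤ Cρ + 2*Cr + CQ := by linarith
    · intro s hs i j hij
      exact hQ.1 i j hij
    · intro s hs i
      beta_reduce
      ring
  -- uniform lower bound for P
  obtain ⟨δ, hδ0, hδle⟩ : ∃ δ > 0, ∀ t ∈ Set.Icc (0:ℝ) T, ∀ i, δ ≤ P t i := by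
    have hIcc : (Set.Icc (0:ℝ) T).Nonempty := ⟨0, h0T⟩
    have hmin : ∀ i : Fin m, ∃ d > 0, ∀ t ∈ Set.Icc (0:ℝ) T, d ≤ P t i := by
      intro i
      obtain ⟨x, hx, hxmin⟩ := isCompact_Icc.exists_isMinOn hIcc (hP.1 i)
      exact ⟨P x i, hPpos x hx i, fun t ht => hxmin ht⟩
    choose d hd0 hdle using hmin
    refine ⟨Finset.univ.inf' Finset.univ_nonempty d, ?_, ?_⟩
    · have hpos : (0:ℝ) < Finset.univ.inf' Finset.univ_nonempty d := by
        rw [Finset.lt_inf'_iff]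
        exact fun i _ => hd0 i
      exact hpos
    · intro t ht i
      exact le_trans (Finset.inf'_le d (Finset.mem_univ i)) (hdle i t ht)
  have hHae : ∀ i, AEMeasurable (fun s => H s i) (volume.restrict (Set.Icc 0 T)) :=
    fun i => (hH.1 i).aemeasurable measurableSet_Icc
  have hMh : ∃ Mh : ℝ, 0 ≤ Mh ∧ ∀ t ∈ Set.Icc (0:ℝ) T, ∀ i, |H t i| ≤ Mh := by
    have hbd : ∀ i : Fin m, ∃ M, ∀ t ∈ Set.Icc (0:ℝ) T, |H t i| ≤ M := by
      intro i
      obtain ⟨M, hM⟩ := isCompact_Icc.exists_bound_of_continuousOn (hH.1 i)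
      exact ⟨M, fun t ht => by simpa [Real.norm_eq_abs] using hM t ht⟩
    choose Mf hMf using hbd
    refine ⟨∑ i, |Mf i|, Finset.sum_nonneg (fun i _ => abs_nonneg _), ?_⟩
    intro t ht i
    calc |H t i| ≤ Mf i := hMf i t ht
      _ ≤ |Mf i| := le_abs_self _
      _ ≤ ∑ i', |Mf i'| :=
          Finset.single_le_sum (f := fun i' => |Mf i'|)
            (fun i' _ => abs_nonneg _) (Finset.mem_univ i)
  obtain ⟨Mh, hMh0, hMhbd⟩ := hMh
  -- data of the H-system
  set FH : ℝ → Fin m → ℝ := fun s i =>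
    H s i * r s i - (1 / P s i) * ∑ j, Q i j * P s j * H s j
      + (H s i / P s i) * ∑ j, Q i j * P s j with hFHdef
  set aH : ℝ → Fin m → ℝ := fun s i => r s i + (1 / P s i) * ∑ j, Q i j * P s j with haHdef
  set bH : ℝ → Fin m → Fin m → ℝ := fun s i j => Q i j * P s j / P s i with hbHdef
  set CH : ℝ := Cr + (m:ℝ)*(CQ*Mp)/δ + CQ*Mp/δ with hCHdef
  have hCH0 : 0 ≤ CH := by positivity
  have hinvP : ∀ s ∈ Set.Icc (0:ℝ) T, ∀ i, |1 / P s i| ≤ 1/δ := by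
    intro s hs i
    have h1 := hδle s hs i
    have h2 := hPpos s hs i
    rw [abs_of_nonneg (by positivity)]
    exact one_div_le_one_div_of_le hδ0 h1
  have haHbd : ∀ s ∈ Set.Icc (0:ℝ) T, ∀ i, |aH s i| ≤ CH := by
    intro s hs i
    have h2 : |(1 / P s i) * ∑ j, Q i j * P s j| ≤ (1/δ) * ((m:ℝ)*(CQ*Mp)) := by
      refine abs_mul_le_aux (hinvP s hs i) ?_ (by positivity)
      exact abs_sum_le_of_le _ (fun j => abs_mul_le_aux (hCQ i j) (hMpbd s hs j) hCQ0)
    calc |aH s i| ≤ |r s i| + |(1 / P s i) * ∑ j, Q i j * P s j| := abs_add_le _ _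
      _ ≤ Cr + (1/δ) * ((m:ℝ)*(CQ*Mp)) := add_le_add (hCr s hs i) h2
      _ ≤ CH := by
          rw [hCHdef]
          have h3 : (1/δ) * ((m:ℝ)*(CQ*Mp)) = (m:ℝ)*(CQ*Mp)/δ := by ring
          rw [h3]
          have h4 : (0:ℝ) ≤ CQ*Mp/δ := by positivity
          linarith
  have hbHbd : ∀ s ∈ Set.Icc (0:ℝ) T, ∀ i j, |bH s i j| ≤ CH := by
    intro s hs i j
    have h1 : |bH s i j| = |Q i j * P s j| * |1 / P s i| := by
      rw [hbHdef, ← abs_mul]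
      beta_reduce
      congr 1
      ring
    calc |bH s i j| = |Q i j * P s j| * |1 / P s i| := h1
      _ ≤ (CQ * Mp) * (1/δ) := by
          refine mul_le_mul (abs_mul_le_aux (hCQ i j) (hMpbd s hs j) hCQ0)
            (hinvP s hs i) (abs_nonneg _) (by positivity)
      _ ≤ CH := by
          rw [hCHdef]
          have h3 : (CQ * Mp) * (1/δ) = CQ*Mp/δ := by ring
          rw [h3]
          have h5 : (0:ℝ) ≤ (m:ℝ)*(CQ*Mp)/δ := by positivity
          linarith
  have hbHoff : ∀ s ∈ Set.Icc (0:ℝ) T, ∀ i j, i ≠ j → 0 ≤ bH s i j := by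
    intro s hs i j hij
    have h1 := hQ.1 i j hij
    have h2 := le_of_lt (hPpos s hs j)
    have h3 := le_of_lt (hPpos s hs i)
    exact div_nonneg (mul_nonneg h1 h2) h3
  have hFHint : ∀ i, IntegrableOn (fun s => FH s i) (Set.Icc 0 T) := by
    intro i
    apply integrableOn_Icc_of_bound
      (C := Mh*Cr + (1/δ)*((m:ℝ)*(CQ*Mp*Mh)) + (Mh*(1/δ))*((m:ℝ)*(CQ*Mp)))
    · refine AEMeasurable.add (AEMeasurable.sub ((hHae i).mul (hrm i).aemeasurable) ?_) ?_
      · exact (aemeasurable_const.div (hPae i)).mul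
          (Finset.aemeasurable_fun_sum _ (fun j _ =>
            (aemeasurable_const.mul (hPae j)).mul (hHae j)))
      · exact ((hHae i).div (hPae i)).mul
          (Finset.aemeasurable_fun_sum _ (fun j _ => aemeasurable_const.mul (hPae j)))
    · intro s hs
      have h1 : |H s i * r s i| ≤ Mh * Cr := abs_mul_le_aux (hMhbd s hs i) (hCr s hs i) hMh0
      have h2 : |(1 / P s i) * ∑ j, Q i j * P s j * H s j| ≤ (1/δ)*((m:ℝ)*(CQ*Mp*Mh)) := by
        refine abs_mul_le_aux (hinvP s hs i) ?_ (by positivity)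
        refine abs_sum_le_of_le _ (fun j => ?_)
        exact abs_mul_le_aux (abs_mul_le_aux (hCQ i j) (hMpbd s hs j) hCQ0)
          (hMhbd s hs j) (by positivity)
      have h3 : |(H s i / P s i) * ∑ j, Q i j * P s j| ≤ (Mh*(1/δ))*((m:ℝ)*(CQ*Mp)) := by
        refine abs_mul_le_aux ?_ ?_ (by positivity)
        · rw [div_eq_mul_one_div]
          exact abs_mul_le_aux (hMhbd s hs i) (hinvP s hs i) hMh0
        · exact abs_sum_le_of_le _ (fun j => abs_mul_le_aux (hCQ i j) (hMpbd s hs j) hCQ0)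
      calc |FH s i| ≤ |H s i * r s i - (1 / P s i) * ∑ j, Q i j * P s j * H s j|
            + |(H s i / P s i) * ∑ j, Q i j * P s j| := abs_add_le _ _
        _ ≤ |H s i * r s i| + |(1 / P s i) * ∑ j, Q i j * P s j * H s j|
            + |(H s i / P s i) * ∑ j, Q i j * P s j| := by
              have := abs_sub (H s i * r s i) ((1 / P s i) * ∑ j, Q i j * P s j * H s j)
              linarith
        _ ≤ Mh*Cr + (1/δ)*((m:ℝ)*(CQ*Mp*Mh)) + (Mh*(1/δ))*((m:ℝ)*(CQ*Mp)) := by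
              linarith
  have hHeq : ∀ t ∈ Set.Icc (0:ℝ) T, ∀ i, H t i = 1 - ∫ s in t..T, FH s i := by
    intro t ht i
    simp only [hFHdef]
    exact hH.2 t ht i
  -- Step 2: strict positivity of H
  have hHpos : ∀ t ∈ Set.Icc (0:ℝ) T, ∀ i, 0 < H t i := by
    refine core_pos hT H FH aH bH CH hH.1 hFHint hCH0 haHbd hbHbd hbHoff ?_ hHeq
    intro s hs i
    have e1 : ∑ j, bH s i j * H s j = (1 / P s i) * ∑ j, Q i j * P s j * H s j := by
      rw [Finset.mul_sum]
      refine Finset.sum_congr rfl (fun j _ => ?_)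
      rw [hbHdef]
      beta_reduce
      ring
    rw [e1]
    simp only [hFHdef, haHdef]
    ring
  -- Step 3: H ≤ 1 via nonnegativity of G = 1 - H
  have hG : ∀ t ∈ Set.Icc (0:ℝ) T, ∀ i, 0 ≤ 1 - H t i := by
    refine core_nonneg hT (fun t i => 1 - H t i) (fun s i => -(FH s i)) aH r bH
      (fun _ => 0) CH
      (fun i => continuousOn_const.sub (hH.1 i))
      (fun i => (hFHint i).neg)
      (fun _ => le_refl 0) hCH0 haHbd hbHbd hbHoff hrpos ?_ ?_
    · intro s hs i
      show -(FH s i) = aH s i * (1 - H s i) - (∑ j, bH s i j * (1 - H s j)) - r s i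
      have e2 : ∑ j, bH s i j * (1 - H s j)
          = (1 / P s i) * (∑ j, Q i j * P s j)
            - (1 / P s i) * ∑ j, Q i j * P s j * H s j := by
        rw [Finset.mul_sum, Finset.mul_sum, ← Finset.sum_sub_distrib]
        refine Finset.sum_congr rfl (fun j _ => ?_)
        rw [hbHdef]
        beta_reduce
        ring
      rw [e2]
      simp only [hFHdef, haHdef]
      ring
    · intro t ht i
      show 1 - H t i = 0 - ∫ s in t..T, -(FH s i)
      rw [intervalIntegral.integral_neg]
      have := hHeq t ht i
      linarith
  intro t ht i
  exact ⟨hHpos t ht i, by have := hG t ht i; linarith⟩
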